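/- Let a, b ∈ ℂ with a² - ab + b² ≠ 0. Then there do not exist (y₀:y₁) ∈ ℙ¹ and (z₀:z₁) ∈ ℙ¹ (not both coordinates zero in either pair) satisfying simultaneously: y₁²z₀² + y₀²z₀z₁ + y₁²z₁² = 0, y₀y₁(az₀² + bz₁²) = 0, and y₀²z₀² + y₁²z₀z₁ + y₀²z₁² = 0. -/
import Mathlib


/-- if a² - ab + b² ≠ 0 then the projection π_x contracts no curve: there
is no point ((y₀:y₁),(z₀:z₁)) ∈ ℙ¹ × ℙ¹ where all three coefficient equations vanish. -/
theorem stmt_17 (a b : ℂ) (h : a ^ 2 - a * b + b ^ 2 ≠ 0) :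
    ¬ ∃ y0 y1 z0 z1 : ℂ, (y0 ≠ 0 ∨ y1 ≠ 0) ∧ (z0 ≠ 0 ∨ z1 ≠ 0) ∧
      y1 ^ 2 * z0 ^ 2 + y0 ^ 2 * z0 * z1 + y1 ^ 2 * z1 ^ 2 = 0 ∧
      y0 * y1 * (a * z0 ^ 2 + b * z1 ^ 2) = 0 ∧
      y0 ^ 2 * z0 ^ 2 + y1 ^ 2 * z0 * z1 + y0 ^ 2 * z1 ^ 2 = 0 := by
  rintro ⟨y0, y1, z0, z1, hy, hz, e1, e2, e3⟩
  -- y0 ≠ 0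
  have hy0 : y0 ≠ 0 := by
    intro h0
    subst h0
    have hy1 : y1 ≠ 0 := by tauto
    have hy1' : y1 ^ 2 ≠ 0 := pow_ne_zero _ hy1
    have h1 : z0 ^ 2 + z1 ^ 2 = 0 := by
      apply mul_left_cancel₀ hy1'
      linear_combination e1
    have h2 : z0 * z1 = 0 := by
      apply mul_left_cancel₀ hy1'
      linear_combination e3
    rcases mul_eq_zero.mp h2 with h3 | h3
    · rcases hz with h4 | h4
      · exact h4 h3
      · apply h4
        have : z1 ^ 2 = 0 := by linear_combination h1 - (z0) * h3
        exact pow_eq_zero_iff (n := 2) (by norm_num) |>.mp this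
    · rcases hz with h4 | h4
      · apply h4
        have : z0 ^ 2 = 0 := by linear_combination h1 - (z1) * h3
        exact pow_eq_zero_iff (n := 2) (by norm_num) |>.mp this
      · exact h4 h3
  have hy1 : y1 ≠ 0 := by
    intro h0
    subst h0
    have hy0' : y0 ^ 2 ≠ 0 := pow_ne_zero _ hy0
    have h1 : z0 ^ 2 + z1 ^ 2 = 0 := by
      apply mul_left_cancel₀ hy0'
      linear_combination e3
    have h2 : z0 * z1 = 0 := by
      apply mul_left_cancel₀ hy0'
      linear_combination e1
    rcases mul_eq_zero.mp h2 with h3 | h3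
    · rcases hz with h4 | h4
      · exact h4 h3
      · apply h4
        have : z1 ^ 2 = 0 := by linear_combination h1 - (z0) * h3
        exact pow_eq_zero_iff (n := 2) (by norm_num) |>.mp this
    · rcases hz with h4 | h4
      · apply h4
        have : z0 ^ 2 = 0 := by linear_combination h1 - (z1) * h3
        exact pow_eq_zero_iff (n := 2) (by norm_num) |>.mp this
      · exact h4 h3
  -- from e2
  have haz : a * z0 ^ 2 + b * z1 ^ 2 = 0 := by
    rcases mul_eq_zero.mp e2 with h3 | h3
    · rcases mul_eq_zero.mp h3 with h4 | h4
      · exact absurd h4 hy0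
      · exact absurd h4 hy1
    · exact h3
  -- z0, z1 ≠ 0
  have hz0 : z0 ≠ 0 := by
    intro h0
    subst h0
    have hz1 : z1 ≠ 0 := by tauto
    have : y1 ^ 2 * z1 ^ 2 = 0 := by linear_combination e1
    rcases mul_eq_zero.mp this with h4 | h4
    · exact hy1 (pow_eq_zero_iff (n := 2) (by norm_num) |>.mp h4)
    · exact hz1 (pow_eq_zero_iff (n := 2) (by norm_num) |>.mp h4)
  have hz1 : z1 ≠ 0 := by
    intro h0
    subst h0
    have : y1 ^ 2 * z0 ^ 2 = 0 := by linear_combination e1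
    rcases mul_eq_zero.mp this with h4 | h4
    · exact hy1 (pow_eq_zero_iff (n := 2) (by norm_num) |>.mp h4)
    · exact hz0 (pow_eq_zero_iff (n := 2) (by norm_num) |>.mp h4)
  -- y0^4 = y1^4
  have hy4 : y0 ^ 4 = y1 ^ 4 := by
    have key : (y0 ^ 4 - y1 ^ 4) * (z0 * z1) = 0 := by
      linear_combination y0 ^ 2 * e1 - y1 ^ 2 * e3
    rcases mul_eq_zero.mp key with h4 | h4
    · exact sub_eq_zero.mp h4
    · rcases mul_eq_zero.mp h4 with h5 | h5
      · exact absurd h5 hz0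
      · exact absurd h5 hz1
  -- z0^4 + z0^2 z1^2 + z1^4 = 0
  have hq : z0 ^ 4 + z0 ^ 2 * z1 ^ 2 + z1 ^ 4 = 0 := by
    have hy1' : y1 ^ 4 ≠ 0 := pow_ne_zero _ hy1
    apply mul_left_cancel₀ hy1'
    linear_combination (y1 ^ 2 * (z0 ^ 2 + z1 ^ 2) - y0 ^ 2 * z0 * z1) * e1
      + z0 ^ 2 * z1 ^ 2 * hy4
  -- final contradiction
  apply h
  have key : (a ^ 2 - a * b + b ^ 2) * z1 ^ 4 = 0 := by
    linear_combination a ^ 2 * hq - (a * z0 ^ 2 - b * z1 ^ 2 + a * z1 ^ 2) * haz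
  rcases mul_eq_zero.mp key with h4 | h4
  · exact h4
  · exact absurd (pow_eq_zero_iff (n := 4) (by norm_num) |>.mp h4) hz1
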